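/- For all k ≥ 0 and all n ≥ k, |S_n(E^k({123, 132, 213}))| = (n!/(n−k)!)·F_{n+1−k}, where F_m denotes the m-th Fibonacci number. -/

import Mathlib

/-- `π` contains `σ` as a pattern: there is a subsequence of `π` (in one-line notation)
whose entries are in the same relative order as those of `σ`. -/
def PContains {n k : ℕ} (π : Equiv.Perm (Fin n)) (σ : Equiv.Perm (Fin k)) : Prop :=
  ∃ f : Fin k → Fin n, StrictMono f ∧ ∀ s t : Fin k, π (f s) < π (f t) ↔ σ s < σ t

/-- `π` avoids the pattern `σ`. -/
def PAvoids {n k : ℕ} (π : Equiv.Perm (Fin n)) (σ : Equiv.Perm (Fin k)) : Prop :=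
  ¬ PContains π σ

/-- `β` (a permutation of `{1,…,m+1}`) is an extension of `α` (a permutation of `{1,…,m}`):
deleting the largest entry from the one-line notation of `β` yields the one-line
notation of `α`.  (Zero-indexed: the positions other than `β⁻¹ (Fin.last m)`, taken in
order via `Fin.succAbove`, carry the values of `α`.) -/
def IsExtension {m : ℕ} (β : Equiv.Perm (Fin (m + 1))) (α : Equiv.Perm (Fin m)) : Prop :=
  ∀ i : Fin m, (α i : ℕ) = (β ((β⁻¹ (Fin.last m)).succAbove i) : ℕ)

/-- The extension `E(R)` of a set `R` of permutations (of arbitrary lengths):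
all permutations that are extensions of some element of `R`. -/
def PermExt (R : Set ((n : ℕ) × Equiv.Perm (Fin n))) : Set ((n : ℕ) × Equiv.Perm (Fin n)) :=
  { p | ∃ (m : ℕ) (β : Equiv.Perm (Fin (m + 1))) (α : Equiv.Perm (Fin m)),
      p = ⟨m + 1, β⟩ ∧ (⟨m, α⟩ : (n : ℕ) × Equiv.Perm (Fin n)) ∈ R ∧ IsExtension β α }

/-- `|S_n(R)|`: the number of permutations of `{1,…,n}` avoiding every pattern in the
set `R` of permutations of arbitrary lengths. -/
noncomputable def SnCard (n : ℕ) (R : Set ((n : ℕ) × Equiv.Perm (Fin n))) : ℕ :=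
  Nat.card {π : Equiv.Perm (Fin n) // ∀ σ ∈ R, PAvoids π σ.2}

/-- The pattern 123 (the identity permutation of `{1,2,3}`). -/
def p123 : Equiv.Perm (Fin 3) := Equiv.refl (Fin 3)

/-- The pattern 132 (one-line notation `1,3,2`, zero-indexed `0,2,1`). -/
noncomputable def p132 : Equiv.Perm (Fin 3) := Equiv.ofBijective ![0, 2, 1] (by decide)

/-- The pattern 213 (one-line notation `2,1,3`, zero-indexed `1,0,2`). -/
noncomputable def p213 : Equiv.Perm (Fin 3) := Equiv.ofBijective ![1, 0, 2] (by decide)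

namespace Pat

variable {n m : ℕ}

/-- A permutation of `Fin m` is determined by its order comparisons. -/
lemma perm_eq_of_lt_iff {σ τ : Equiv.Perm (Fin m)}
    (h : ∀ a b, σ a < σ b ↔ τ a < τ b) : σ = τ := by
  have hsm : StrictMono (fun a => τ (σ.symm a)) := by
    intro a b hab
    rw [← h]
    simpa using hab
  have hr : Set.range (fun a => τ (σ.symm a)) = Set.range (id : Fin m → Fin m) := by
    rw [Set.range_id]
    exact Function.Surjective.range_eq (τ.surjective.comp σ.symm.surjective)
  haveI : WellFoundedLT (Fin m) := inferInstance
  have hfe := (hsm.range_inj strictMono_id).mp hr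
  ext a
  have h2 := congrFun hfe (σ a)
  simp at h2
  exact congrArg Fin.val h2.symm

/-- Delete the largest entry from a permutation. -/
noncomputable def del (π : Equiv.Perm (Fin (n + 1))) : Equiv.Perm (Fin n) :=
  Equiv.ofBijective
    (fun i => (π ((π⁻¹ (Fin.last n)).succAbove i)).castPred (by
      intro hc
      apply Fin.succAbove_ne (π⁻¹ (Fin.last n)) i
      have := congrArg π.symm hc
      simpa [Equiv.Perm.inv_def] using this))
    (Finite.injective_iff_bijective.mp (by
      intro a b hab
      apply Fin.succAbove_right_injective (p := π⁻¹ (Fin.last n))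
      apply π.injective
      apply Fin.ext
      simpa using congrArg Fin.val hab))

lemma del_val (π : Equiv.Perm (Fin (n + 1))) (i : Fin n) :
    ((del π) i : ℕ) = (π ((π⁻¹ (Fin.last n)).succAbove i) : ℕ) := rfl

lemma del_lt_iff (π : Equiv.Perm (Fin (n + 1))) (a b : Fin n) :
    del π a < del π b ↔
      π ((π⁻¹ (Fin.last n)).succAbove a) < π ((π⁻¹ (Fin.last n)).succAbove b) := by
  rw [Fin.lt_def, Fin.lt_def, del_val, del_val]

lemma isExtension_del (π : Equiv.Perm (Fin (n + 1))) : IsExtension π (del π) :=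
  fun i => (del_val π i)

lemma isExtension_iff {β : Equiv.Perm (Fin (m + 1))} {α : Equiv.Perm (Fin m)} :
    IsExtension β α ↔ α = del β :=
  ⟨fun h => Equiv.ext fun i => Fin.ext ((h i).trans (del_val β i).symm),
   fun h => h ▸ isExtension_del β⟩


lemma pcontains_del {π : Equiv.Perm (Fin (n + 1))} {β : Equiv.Perm (Fin (m + 1))}
    (hc : PContains π β) : PContains (del π) (del β) := by
  obtain ⟨g, hg, hord⟩ := hc
  have hβq : β (β⁻¹ (Fin.last m)) = Fin.last m := β.apply_symm_apply _
  have hne : ∀ j : Fin m, g ((β⁻¹ (Fin.last m)).succAbove j) ≠ π⁻¹ (Fin.last n) := by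
    intro j hj
    have h1 : π (g ((β⁻¹ (Fin.last m)).succAbove j)) = Fin.last n := by
      rw [hj]; exact π.apply_symm_apply _
    have h2 : β ((β⁻¹ (Fin.last m)).succAbove j) < β (β⁻¹ (Fin.last m)) := by
      rw [hβq]
      refine lt_of_le_of_ne (Fin.le_last _) ?_
      intro hcc
      exact Fin.succAbove_ne (β⁻¹ (Fin.last m)) j (β.injective (hcc.trans hβq.symm))
    have h3 := (hord _ _).mpr h2
    rw [h1] at h3
    exact absurd h3 (Fin.not_lt.mpr (Fin.le_last _))
  choose h hh using fun j => Fin.exists_succAbove_eq (hne j)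
  refine ⟨h, ?_, ?_⟩
  · intro a b hab
    have hmono := (Fin.strictMono_succAbove (π⁻¹ (Fin.last n))).lt_iff_lt (a := h a) (b := h b)
    rw [← hmono, hh, hh]
    exact hg ((Fin.strictMono_succAbove _) hab)
  · intro a b
    rw [del_lt_iff π, del_lt_iff β, hh, hh]
    exact hord _ _

lemma pcontains_del_of_ext {π : Equiv.Perm (Fin (n + 1))} {α : Equiv.Perm (Fin m)}
    {β : Equiv.Perm (Fin (m + 1))} (hext : IsExtension β α) (hc : PContains π β) :
    PContains (del π) α := by
  have h := pcontains_del hc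
  rwa [← isExtension_iff.mp hext] at h

lemma pcontains_ext_of_del {π : Equiv.Perm (Fin (n + 1))} {α : Equiv.Perm (Fin m)}
    (hc : PContains (del π) α) :
    ∃ β : Equiv.Perm (Fin (m + 1)), IsExtension β α ∧ PContains π β := by
  obtain ⟨h, hmono, hord⟩ := hc
  set p := π⁻¹ (Fin.last n) with hp
  have hπp : π p = Fin.last n := π.apply_symm_apply _
  set F : Fin m → Fin (n + 1) := fun j => p.succAbove (h j) with hF
  have hFmono : StrictMono F := (Fin.strictMono_succAbove p).comp hmono
  set T : Finset (Fin (n + 1)) := insert p (Finset.image F Finset.univ) with hT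
  have hpni : p ∉ Finset.image F Finset.univ := by
    simp only [Finset.mem_image]
    rintro ⟨j, -, hj⟩
    exact Fin.succAbove_ne p (h j) hj
  have hTcard : T.card = m + 1 := by
    rw [hT, Finset.card_insert_of_notMem hpni,
      Finset.card_image_of_injective _ hFmono.injective, Finset.card_univ, Fintype.card_fin]
  set G : Fin (m + 1) → Fin (n + 1) := ⇑(T.orderEmbOfFin hTcard) with hG
  have hGmono : StrictMono G := (T.orderEmbOfFin hTcard).strictMono
  have hGmem : ∀ s, G s ∈ T := fun s => Finset.orderEmbOfFin_mem T hTcard s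
  have hGinj := hGmono.injective
  set V : Finset (Fin (n + 1)) := Finset.image (⇑π) T with hV
  have hVcard : V.card = m + 1 := by
    rw [hV, Finset.card_image_of_injective _ π.injective, hTcard]
  set W := V.orderIsoOfFin hVcard with hW
  set β0 : Fin (m + 1) → Fin (m + 1) :=
    fun s => W.symm ⟨π (G s), Finset.mem_image_of_mem _ (hGmem s)⟩ with hβ0
  have hβ0inj : Function.Injective β0 := by
    intro a b hab
    apply hGinj
    apply π.injective
    have h2 := W.symm.injective hab
    exact congrArg Subtype.val h2
  set β : Equiv.Perm (Fin (m + 1)) :=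
    Equiv.ofBijective β0 (Finite.injective_iff_bijective.mp hβ0inj) with hβ
  have hβ0app : ∀ s, β s = β0 s := fun s => rfl
  have hβlt : ∀ s t, π (G s) < π (G t) ↔ β s < β t := by
    intro s t
    rw [hβ0app, hβ0app, hβ0]
    simp only []
    rw [W.symm.lt_iff_lt]
    exact (Subtype.mk_lt_mk).symm
  have hcontπ : PContains π β := ⟨G, hGmono, fun s t => hβlt s t⟩
  -- identify the position of the maximum of β
  have hpT : p ∈ T := Finset.mem_insert_self _ _
  obtain ⟨r, hGr⟩ : ∃ r, G r = p := by
    have : p ∈ Set.range G := by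
      rw [hG, Finset.range_orderEmbOfFin]
      exact_mod_cast hpT
    exact this
  have hβr : β r = Fin.last m := by
    by_contra hcne
    obtain ⟨s, hs⟩ : ∃ s, β s = Fin.last m := ⟨β.symm _, β.apply_symm_apply _⟩
    have hsr : s ≠ r := fun e => hcne (e ▸ hs)
    have h1 : π (G s) < π (G r) := by
      rw [hGr, hπp]
      refine lt_of_le_of_ne (Fin.le_last _) ?_
      intro he
      exact hsr (hGinj ((π.injective (he.trans hπp.symm)).trans hGr.symm))
    have h2 := (hβlt s r).mp h1
    rw [hs] at h2
    exact absurd h2 (Fin.not_lt.mpr (Fin.le_last _))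
  have hqr : β⁻¹ (Fin.last m) = r := by rw [← hβr]; exact β.symm_apply_apply r
  -- identify G ∘ r.succAbove with F
  have hGsucc : ∀ j : Fin m, G (r.succAbove j) = F j := by
    have h1 : StrictMono (fun j => G (r.succAbove j)) :=
      hGmono.comp (Fin.strictMono_succAbove r)
    have h2 : Set.range (fun j => G (r.succAbove j)) = Set.range F := by
      have e1 : Set.range (fun j => G (r.succAbove j)) = G '' {r}ᶜ := by
        rw [← Fin.range_succAbove r]
        exact Set.range_comp G r.succAbove
      have e2 : G '' {r}ᶜ = Set.range G \ {p} := by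
        rw [Set.compl_eq_univ_diff, Set.image_diff hGinj, Set.image_univ,
          Set.image_singleton, hGr]
      have e3 : Set.range G = insert p (Set.range F) := by
        rw [hG, Finset.range_orderEmbOfFin, hT]
        push_cast [Finset.coe_insert, Finset.coe_image, Finset.coe_univ, Set.image_univ]
        rfl
      have e4 : p ∉ Set.range F := by
        rintro ⟨j, hj⟩
        exact Fin.succAbove_ne p (h j) hj
      rw [e1, e2, e3, Set.insert_diff_self_of_notMem e4]
    haveI : WellFoundedLT (Fin m) := inferInstance
    have := (h1.range_inj hFmono).mp h2
    exact fun j => congrFun this j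
  have hdelβ : α = del β := by
    apply perm_eq_of_lt_iff
    intro a b
    rw [del_lt_iff β, hqr, ← hβlt, hGsucc, hGsucc]
    rw [hF]
    simp only []
    rw [← del_lt_iff π]
    exact (hord a b).symm
  exact ⟨β, isExtension_iff.mpr hdelβ, hcontπ⟩

/-- Insert the value `Fin.last n` at position `p`. -/
noncomputable def ins (p : Fin (n + 1)) (τ : Equiv.Perm (Fin n)) : Equiv.Perm (Fin (n + 1)) :=
  (finSuccEquiv' p).trans ((Equiv.optionCongr τ).trans (finSuccEquiv' (Fin.last n)).symm)

lemma ins_apply_self (p : Fin (n + 1)) (τ : Equiv.Perm (Fin n)) :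
    ins p τ p = Fin.last n := by
  simp [ins, finSuccEquiv'_at, finSuccEquiv'_symm_none]

lemma ins_apply_succAbove (p : Fin (n + 1)) (τ : Equiv.Perm (Fin n)) (j : Fin n) :
    ins p τ (p.succAbove j) = (τ j).castSucc := by
  simp [ins, finSuccEquiv'_succAbove, finSuccEquiv'_symm_some, Fin.succAbove_last]

lemma ins_inv_last (p : Fin (n + 1)) (τ : Equiv.Perm (Fin n)) :
    (ins p τ)⁻¹ (Fin.last n) = p := by
  rw [← ins_apply_self p τ]
  exact (ins p τ).symm_apply_apply p

lemma del_ins (p : Fin (n + 1)) (τ : Equiv.Perm (Fin n)) : del (ins p τ) = τ := by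
  apply Equiv.ext
  intro j
  apply Fin.ext
  rw [del_val, ins_inv_last, ins_apply_succAbove]
  simp

lemma ins_del (π : Equiv.Perm (Fin (n + 1))) : ins (π⁻¹ (Fin.last n)) (del π) = π := by
  apply Equiv.ext
  intro i
  refine Fin.succAboveCases (π⁻¹ (Fin.last n)) ?_ ?_ i
  · rw [ins_apply_self]
    exact (π.apply_symm_apply _).symm
  · intro j
    rw [ins_apply_succAbove]
    apply Fin.ext
    simpa using (del_val π j)

lemma avoids_permExt_iff {R : Set ((N : ℕ) × Equiv.Perm (Fin N))}
    {π : Equiv.Perm (Fin (n + 1))} :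
    (∀ σ ∈ PermExt R, PAvoids π σ.2) ↔ (∀ σ ∈ R, PAvoids (del π) σ.2) := by
  constructor
  · rintro H ⟨m, α⟩ hmem hcon
    obtain ⟨β, hext, hcβ⟩ := pcontains_ext_of_del hcon
    exact H ⟨m + 1, β⟩ ⟨m, β, α, rfl, hmem, hext⟩ hcβ
  · rintro H σ ⟨m, β, α, rfl, hmem, hext⟩ hcon
    exact H ⟨m, α⟩ hmem (pcontains_del_of_ext hext hcon)

lemma snCard_permExt (R : Set ((N : ℕ) × Equiv.Perm (Fin N))) :
    SnCard (n + 1) (PermExt R) = (n + 1) * SnCard n R := by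
  have e : {π : Equiv.Perm (Fin (n + 1)) // ∀ σ ∈ PermExt R, PAvoids π σ.2} ≃
      Fin (n + 1) × {τ : Equiv.Perm (Fin n) // ∀ σ ∈ R, PAvoids τ σ.2} :=
    { toFun := fun π => (π.1⁻¹ (Fin.last n), ⟨del π.1, avoids_permExt_iff.mp π.2⟩)
      invFun := fun x => ⟨ins x.1 x.2.1, avoids_permExt_iff.mpr (by
        rw [del_ins]; exact x.2.2)⟩
      left_inv := fun π => Subtype.ext (ins_del π.1)
      right_inv := fun x => by
        obtain ⟨p, τ, hτ⟩ := x
        refine Prod.ext ?_ (Subtype.ext ?_) <;> simp [ins_inv_last, del_ins] }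
  rw [SnCard, SnCard, Nat.card_congr e, Nat.card_prod,
    Nat.card_eq_fintype_card (α := Fin (n + 1)), Fintype.card_fin]

/-- The key structural condition: values at distance `≥ 2` are decreasing. -/
def Cond {N : ℕ} (π : Equiv.Perm (Fin N)) : Prop :=
  ∀ i k : Fin N, (i : ℕ) + 2 ≤ (k : ℕ) → π k < π i

lemma triple_zero {N : ℕ} (i j k : Fin N) : ![i, j, k] 0 = i := rfl
lemma triple_one {N : ℕ} (i j k : Fin N) : ![i, j, k] 1 = j := rfl
lemma triple_two {N : ℕ} (i j k : Fin N) : ![i, j, k] 2 = k := rfl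

lemma strictMono_triple {N : ℕ} {i j k : Fin N} (h1 : i < j) (h2 : j < k) :
    StrictMono ![i, j, k] := by
  rw [Fin.strictMono_iff_lt_succ]
  intro s
  match s with
  | 0 => exact h1
  | 1 => exact h2

lemma avoid_of_cond {N : ℕ} {π : Equiv.Perm (Fin N)} (hC : Cond π)
    (σ : Equiv.Perm (Fin 3)) (hσ : σ 0 < σ 2) : PAvoids π σ := by
  rintro ⟨f, hf, hord⟩
  have e1 : f 0 < f 1 := hf (by decide)
  have e2 : f 1 < f 2 := hf (by decide)
  have e1' : (f 0 : ℕ) < f 1 := e1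
  have e2' : (f 1 : ℕ) < f 2 := e2
  have key : (f 0 : ℕ) + 2 ≤ f 2 := by omega
  have hlt := hC (f 0) (f 2) key
  have hgt := (hord 0 2).mpr hσ
  exact absurd (hlt.trans hgt) (lt_irrefl _)


lemma cond_of_avoid {N : ℕ} {π : Equiv.Perm (Fin N)}
    (H1 : PAvoids π p123) (H2 : PAvoids π p132) (H3 : PAvoids π p213) : Cond π := by
  intro i k hik
  by_contra hlt
  have hik' : i ≠ k := by
    intro e
    rw [e] at hik
    omega
  have hle : π i ≤ π k := Fin.not_lt.mp hlt
  have hne : π i ≠ π k := fun e => hik' (π.injective e)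
  have ha1 : (π i : ℕ) < π k := Fin.lt_def.mp (lt_of_le_of_ne hle hne)
  have hkN : (k : ℕ) < N := k.isLt
  set j : Fin N := ⟨(i : ℕ) + 1, by omega⟩ with hjdef
  have hjv : (j : ℕ) = (i : ℕ) + 1 := rfl
  have hij : i < j := Fin.lt_def.mpr (by omega)
  have hjk : j < k := Fin.lt_def.mpr (by omega)
  rcases lt_trichotomy ((π j : ℕ)) ((π i : ℕ)) with hcase | hcase | hcase
  · refine H3 ⟨![i, j, k], strictMono_triple hij hjk, ?_⟩
    intro s t
    match s, t with
    | 0, 0 =>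
      simp only [triple_zero, triple_one, triple_two]
      refine ⟨fun hlt => ?_, fun hlt => ?_⟩
      · first
          | decide
          | exact absurd (Fin.lt_def.mp hlt) (by omega)
      · first
          | exact absurd hlt (by decide)
          | exact Fin.lt_def.mpr (by omega)
    | 0, 1 =>
      simp only [triple_zero, triple_one, triple_two]
      refine ⟨fun hlt => ?_, fun hlt => ?_⟩
      · first
          | decide
          | exact absurd (Fin.lt_def.mp hlt) (by omega)
      · first
          | exact absurd hlt (by decide)
          | exact Fin.lt_def.mpr (by omega)
    | 0, 2 =>
      simp only [triple_zero, triple_one, triple_two]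
      refine ⟨fun hlt => ?_, fun hlt => ?_⟩
      · first
          | decide
          | exact absurd (Fin.lt_def.mp hlt) (by omega)
      · first
          | exact absurd hlt (by decide)
          | exact Fin.lt_def.mpr (by omega)
    | 1, 0 =>
      simp only [triple_zero, triple_one, triple_two]
      refine ⟨fun hlt => ?_, fun hlt => ?_⟩
      · first
          | decide
          | exact absurd (Fin.lt_def.mp hlt) (by omega)
      · first
          | exact absurd hlt (by decide)
          | exact Fin.lt_def.mpr (by omega)
    | 1, 1 =>
      simp only [triple_zero, triple_one, triple_two]
      refine ⟨fun hlt => ?_, fun hlt => ?_⟩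
      · first
          | decide
          | exact absurd (Fin.lt_def.mp hlt) (by omega)
      · first
          | exact absurd hlt (by decide)
          | exact Fin.lt_def.mpr (by omega)
    | 1, 2 =>
      simp only [triple_zero, triple_one, triple_two]
      refine ⟨fun hlt => ?_, fun hlt => ?_⟩
      · first
          | decide
          | exact absurd (Fin.lt_def.mp hlt) (by omega)
      · first
          | exact absurd hlt (by decide)
          | exact Fin.lt_def.mpr (by omega)
    | 2, 0 =>
      simp only [triple_zero, triple_one, triple_two]
      refine ⟨fun hlt => ?_, fun hlt => ?_⟩
      · first
          | decide
          | exact absurd (Fin.lt_def.mp hlt) (by omega)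
      · first
          | exact absurd hlt (by decide)
          | exact Fin.lt_def.mpr (by omega)
    | 2, 1 =>
      simp only [triple_zero, triple_one, triple_two]
      refine ⟨fun hlt => ?_, fun hlt => ?_⟩
      · first
          | decide
          | exact absurd (Fin.lt_def.mp hlt) (by omega)
      · first
          | exact absurd hlt (by decide)
          | exact Fin.lt_def.mpr (by omega)
    | 2, 2 =>
      simp only [triple_zero, triple_one, triple_two]
      refine ⟨fun hlt => ?_, fun hlt => ?_⟩
      · first
          | decide
          | exact absurd (Fin.lt_def.mp hlt) (by omega)
      · first
          | exact absurd hlt (by decide)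
          | exact Fin.lt_def.mpr (by omega)
  · have e := π.injective (Fin.ext hcase)
    have := congrArg Fin.val e
    have hij' := Fin.lt_def.mp hij
    omega
  · rcases lt_trichotomy ((π j : ℕ)) ((π k : ℕ)) with hcase2 | hcase2 | hcase2
    · refine H1 ⟨![i, j, k], strictMono_triple hij hjk, ?_⟩
      intro s t
      match s, t with
      | 0, 0 =>
        simp only [triple_zero, triple_one, triple_two]
        refine ⟨fun hlt => ?_, fun hlt => ?_⟩
        · first
            | decide
            | exact absurd (Fin.lt_def.mp hlt) (by omega)
        · first
            | exact absurd hlt (by decide)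
            | exact Fin.lt_def.mpr (by omega)
      | 0, 1 =>
        simp only [triple_zero, triple_one, triple_two]
        refine ⟨fun hlt => ?_, fun hlt => ?_⟩
        · first
            | decide
            | exact absurd (Fin.lt_def.mp hlt) (by omega)
        · first
            | exact absurd hlt (by decide)
            | exact Fin.lt_def.mpr (by omega)
      | 0, 2 =>
        simp only [triple_zero, triple_one, triple_two]
        refine ⟨fun hlt => ?_, fun hlt => ?_⟩
        · first
            | decide
            | exact absurd (Fin.lt_def.mp hlt) (by omega)
        · first
            | exact absurd hlt (by decide)
            | exact Fin.lt_def.mpr (by omega)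
      | 1, 0 =>
        simp only [triple_zero, triple_one, triple_two]
        refine ⟨fun hlt => ?_, fun hlt => ?_⟩
        · first
            | decide
            | exact absurd (Fin.lt_def.mp hlt) (by omega)
        · first
            | exact absurd hlt (by decide)
            | exact Fin.lt_def.mpr (by omega)
      | 1, 1 =>
        simp only [triple_zero, triple_one, triple_two]
        refine ⟨fun hlt => ?_, fun hlt => ?_⟩
        · first
            | decide
            | exact absurd (Fin.lt_def.mp hlt) (by omega)
        · first
            | exact absurd hlt (by decide)
            | exact Fin.lt_def.mpr (by omega)
      | 1, 2 =>
        simp only [triple_zero, triple_one, triple_two]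
        refine ⟨fun hlt => ?_, fun hlt => ?_⟩
        · first
            | decide
            | exact absurd (Fin.lt_def.mp hlt) (by omega)
        · first
            | exact absurd hlt (by decide)
            | exact Fin.lt_def.mpr (by omega)
      | 2, 0 =>
        simp only [triple_zero, triple_one, triple_two]
        refine ⟨fun hlt => ?_, fun hlt => ?_⟩
        · first
            | decide
            | exact absurd (Fin.lt_def.mp hlt) (by omega)
        · first
            | exact absurd hlt (by decide)
            | exact Fin.lt_def.mpr (by omega)
      | 2, 1 =>
        simp only [triple_zero, triple_one, triple_two]
        refine ⟨fun hlt => ?_, fun hlt => ?_⟩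
        · first
            | decide
            | exact absurd (Fin.lt_def.mp hlt) (by omega)
        · first
            | exact absurd hlt (by decide)
            | exact Fin.lt_def.mpr (by omega)
      | 2, 2 =>
        simp only [triple_zero, triple_one, triple_two]
        refine ⟨fun hlt => ?_, fun hlt => ?_⟩
        · first
            | decide
            | exact absurd (Fin.lt_def.mp hlt) (by omega)
        · first
            | exact absurd hlt (by decide)
            | exact Fin.lt_def.mpr (by omega)
    · have e := π.injective (Fin.ext hcase2)
      have := congrArg Fin.val e
      have hjk' := Fin.lt_def.mp hjk
      omega
    · refine H2 ⟨![i, j, k], strictMono_triple hij hjk, ?_⟩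
      intro s t
      match s, t with
      | 0, 0 =>
        simp only [triple_zero, triple_one, triple_two]
        refine ⟨fun hlt => ?_, fun hlt => ?_⟩
        · first
            | decide
            | exact absurd (Fin.lt_def.mp hlt) (by omega)
        · first
            | exact absurd hlt (by decide)
            | exact Fin.lt_def.mpr (by omega)
      | 0, 1 =>
        simp only [triple_zero, triple_one, triple_two]
        refine ⟨fun hlt => ?_, fun hlt => ?_⟩
        · first
            | decide
            | exact absurd (Fin.lt_def.mp hlt) (by omega)
        · first
            | exact absurd hlt (by decide)
            | exact Fin.lt_def.mpr (by omega)
      | 0, 2 =>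
        simp only [triple_zero, triple_one, triple_two]
        refine ⟨fun hlt => ?_, fun hlt => ?_⟩
        · first
            | decide
            | exact absurd (Fin.lt_def.mp hlt) (by omega)
        · first
            | exact absurd hlt (by decide)
            | exact Fin.lt_def.mpr (by omega)
      | 1, 0 =>
        simp only [triple_zero, triple_one, triple_two]
        refine ⟨fun hlt => ?_, fun hlt => ?_⟩
        · first
            | decide
            | exact absurd (Fin.lt_def.mp hlt) (by omega)
        · first
            | exact absurd hlt (by decide)
            | exact Fin.lt_def.mpr (by omega)
      | 1, 1 =>
        simp only [triple_zero, triple_one, triple_two]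
        refine ⟨fun hlt => ?_, fun hlt => ?_⟩
        · first
            | decide
            | exact absurd (Fin.lt_def.mp hlt) (by omega)
        · first
            | exact absurd hlt (by decide)
            | exact Fin.lt_def.mpr (by omega)
      | 1, 2 =>
        simp only [triple_zero, triple_one, triple_two]
        refine ⟨fun hlt => ?_, fun hlt => ?_⟩
        · first
            | decide
            | exact absurd (Fin.lt_def.mp hlt) (by omega)
        · first
            | exact absurd hlt (by decide)
            | exact Fin.lt_def.mpr (by omega)
      | 2, 0 =>
        simp only [triple_zero, triple_one, triple_two]
        refine ⟨fun hlt => ?_, fun hlt => ?_⟩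
        · first
            | decide
            | exact absurd (Fin.lt_def.mp hlt) (by omega)
        · first
            | exact absurd hlt (by decide)
            | exact Fin.lt_def.mpr (by omega)
      | 2, 1 =>
        simp only [triple_zero, triple_one, triple_two]
        refine ⟨fun hlt => ?_, fun hlt => ?_⟩
        · first
            | decide
            | exact absurd (Fin.lt_def.mp hlt) (by omega)
        · first
            | exact absurd hlt (by decide)
            | exact Fin.lt_def.mpr (by omega)
      | 2, 2 =>
        simp only [triple_zero, triple_one, triple_two]
        refine ⟨fun hlt => ?_, fun hlt => ?_⟩
        · first
            | decide
            | exact absurd (Fin.lt_def.mp hlt) (by omega)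
        · first
            | exact absurd hlt (by decide)
            | exact Fin.lt_def.mpr (by omega)

lemma cond_iff_avoid3 {N : ℕ} (π : Equiv.Perm (Fin N)) :
    (∀ σ ∈ ({⟨3, p123⟩, ⟨3, p132⟩, ⟨3, p213⟩} : Set ((n : ℕ) × Equiv.Perm (Fin n))),
      PAvoids π σ.2) ↔ Cond π := by
  constructor
  · intro H
    exact cond_of_avoid
      (H ⟨3, p123⟩ (Set.mem_insert _ _))
      (H ⟨3, p132⟩ (Set.mem_insert_of_mem _ (Set.mem_insert _ _)))
      (H ⟨3, p213⟩ (Set.mem_insert_of_mem _ (Set.mem_insert_of_mem _ rfl)))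
  · rintro hC σ hσ
    simp only [Set.mem_insert_iff, Set.mem_singleton_iff] at hσ
    rcases hσ with rfl | rfl | rfl
    · exact avoid_of_cond hC p123 (by decide)
    · exact avoid_of_cond hC p132 (by decide)
    · exact avoid_of_cond hC p213 (by decide)

lemma succAbove_val (p : Fin (n + 1)) (i : Fin n) :
    (((p.succAbove i) : ℕ) = i ∧ (i : ℕ) < p) ∨
      (((p.succAbove i) : ℕ) = (i : ℕ) + 1 ∧ (p : ℕ) ≤ i) := by
  rcases lt_or_ge (Fin.castSucc i) p with hlt | hle
  · left
    rw [Fin.succAbove_of_castSucc_lt _ _ hlt]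
    have := Fin.lt_def.mp hlt
    simp_all
  · right
    rw [Fin.succAbove_of_le_castSucc _ _ hle]
    have := Fin.le_def.mp hle
    simp_all

lemma cond_del {π : Equiv.Perm (Fin (n + 1))} (h : Cond π) : Cond (del π) := by
  intro j k hjk
  rw [del_lt_iff]
  apply h
  rcases succAbove_val (π⁻¹ (Fin.last n)) j with ⟨e1, l1⟩ | ⟨e1, l1⟩ <;>
    rcases succAbove_val (π⁻¹ (Fin.last n)) k with ⟨e2, l2⟩ | ⟨e2, l2⟩ <;> omega

lemma cond_ins_zero {τ : Equiv.Perm (Fin n)} (h : Cond τ) : Cond (ins 0 τ) := by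
  intro i k hik
  have hk0 : k ≠ 0 := by
    intro e
    rw [e] at hik
    simp at hik
  obtain ⟨l, hl⟩ := Fin.exists_succAbove_eq hk0
  have hkval := congrArg Fin.val hl
  have hlval : ((0 : Fin (n + 1)).succAbove l : ℕ) = (l : ℕ) + 1 := by
    rcases succAbove_val 0 l with ⟨e1, l1⟩ | ⟨e1, l1⟩
    · simp at l1
    · exact e1
  rcases eq_or_ne i 0 with rfl | hi0
  · rw [ins_apply_self 0 τ, ← hl, ins_apply_succAbove]
    exact Fin.castSucc_lt_last _
  · obtain ⟨j, hj⟩ := Fin.exists_succAbove_eq hi0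
    have hival := congrArg Fin.val hj
    have hjval : ((0 : Fin (n + 1)).succAbove j : ℕ) = (j : ℕ) + 1 := by
      rcases succAbove_val 0 j with ⟨e1, l1⟩ | ⟨e1, l1⟩
      · simp at l1
      · exact e1
    rw [← hj, ← hl, ins_apply_succAbove, ins_apply_succAbove,
      Fin.castSucc_lt_castSucc_iff]
    exact h j l (by omega)

lemma cond_ins_one {ρ : Equiv.Perm (Fin (n + 1))} (h : Cond ρ)
    (h0 : ρ 0 = Fin.last n) : Cond (ins 1 ρ) := by
  intro i k hik
  have hone : ((1 : Fin (n + 2)) : ℕ) = 1 := rfl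
  have hk1 : k ≠ 1 := by
    intro e
    rw [e, hone] at hik
    omega
  obtain ⟨l, hl⟩ := Fin.exists_succAbove_eq hk1
  have hkval := congrArg Fin.val hl
  rcases eq_or_ne i 1 with rfl | hi1
  · rw [ins_apply_self, ← hl, ins_apply_succAbove]
    exact Fin.castSucc_lt_last _
  · obtain ⟨j, hj⟩ := Fin.exists_succAbove_eq hi1
    have hival := congrArg Fin.val hj
    rw [← hj, ← hl, ins_apply_succAbove, ins_apply_succAbove,
      Fin.castSucc_lt_castSucc_iff]
    rcases succAbove_val 1 j with ⟨e1, l1⟩ | ⟨e1, l1⟩ <;>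
      rcases succAbove_val 1 l with ⟨e2, l2⟩ | ⟨e2, l2⟩ <;> rw [hone] at l1 l2
    · omega
    · -- j = 0, i = 0; need ρ l < ρ 0 = last, with l ≠ 0
      have hj0 : j = 0 := by
        apply Fin.ext
        simp only [Fin.val_zero]
        omega
      have hlne : l ≠ 0 := by
        intro e
        rw [e] at l2
        simp at l2
      rw [hj0, h0]
      refine lt_of_le_of_ne (Fin.le_last _) ?_
      intro he
      exact hlne (ρ.injective (he.trans h0.symm))
    · omega
    · exact h j l (by omega)

lemma top_pos {π : Equiv.Perm (Fin (n + 2))} (h : Cond π)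
    (h0 : π 0 ≠ Fin.last (n + 1)) :
    π⁻¹ (Fin.last (n + 1)) = 1 ∧ π 0 = Fin.castSucc (Fin.last n) := by
  have hone : ((1 : Fin (n + 2)) : ℕ) = 1 := rfl
  have hπp : π (π⁻¹ (Fin.last (n + 1))) = Fin.last (n + 1) := π.apply_symm_apply _
  have hp2 : ((π⁻¹ (Fin.last (n + 1))) : ℕ) < 2 := by
    by_contra h2
    have hlt := h 0 (π⁻¹ (Fin.last (n + 1))) (by rw [Fin.val_zero]; omega)
    rw [hπp] at hlt
    exact absurd hlt (Fin.not_lt.mpr (Fin.le_last _))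
  have hp0 : ((π⁻¹ (Fin.last (n + 1))) : ℕ) ≠ 0 := by
    intro e
    apply h0
    have hz : π⁻¹ (Fin.last (n + 1)) = 0 := Fin.ext (by simpa using e)
    rw [← hz]
    exact hπp
  have hp1 : π⁻¹ (Fin.last (n + 1)) = 1 := Fin.ext (by rw [hone]; omega)
  have hπq : π (π⁻¹ (Fin.castSucc (Fin.last n))) = Fin.castSucc (Fin.last n) :=
    π.apply_symm_apply _
  have hq2 : ((π⁻¹ (Fin.castSucc (Fin.last n))) : ℕ) < 2 := by
    by_contra h2
    have hlt := h 0 (π⁻¹ (Fin.castSucc (Fin.last n))) (by rw [Fin.val_zero]; omega)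
    rw [hπq] at hlt
    apply h0
    apply Fin.ext
    have hv := Fin.lt_def.mp hlt
    have hb : ((π 0) : ℕ) < n + 2 := (π 0).isLt
    simp only [Fin.coe_castSucc, Fin.val_last] at hv ⊢
    omega
  have hq1 : ((π⁻¹ (Fin.castSucc (Fin.last n))) : ℕ) ≠ 1 := by
    intro e
    have heq : π⁻¹ (Fin.castSucc (Fin.last n)) = π⁻¹ (Fin.last (n + 1)) := by
      rw [hp1]
      exact Fin.ext (by rw [hone]; exact e)
    rw [heq, hπp] at hπq
    have := congrArg Fin.val hπq
    simp at this
  have hq0 : π⁻¹ (Fin.castSucc (Fin.last n)) = 0 := Fin.ext (by rw [Fin.val_zero]; omega)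
  refine ⟨hp1, ?_⟩
  rw [← hq0]
  exact hπq

lemma one_succAbove_zero : (1 : Fin (n + 2)).succAbove 0 = 0 := by
  rw [Fin.succAbove_of_castSucc_lt]
  · simp
  · simp [Fin.lt_def]

lemma del_zero_eq_last {π : Equiv.Perm (Fin (n + 2))}
    (hp : π⁻¹ (Fin.last (n + 1)) = 1) (h0 : π 0 = Fin.castSucc (Fin.last n)) :
    del π 0 = Fin.last n := by
  apply Fin.ext
  rw [del_val, hp, one_succAbove_zero, h0]
  simp

lemma card_cond_rec (n : ℕ) :
    Nat.card {π : Equiv.Perm (Fin (n + 2)) // Cond π} =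
      Nat.card {τ : Equiv.Perm (Fin (n + 1)) // Cond τ} +
        Nat.card {τ : Equiv.Perm (Fin n) // Cond τ} := by
  rw [← Nat.card_sum]
  apply Nat.card_congr
  refine
    { toFun := fun π =>
        if h0 : π.1 0 = Fin.last (n + 1) then Sum.inl ⟨del π.1, cond_del π.2⟩
        else Sum.inr ⟨del (del π.1), cond_del (cond_del π.2)⟩
      invFun := fun x =>
        Sum.rec (fun τ => ⟨ins 0 τ.1, cond_ins_zero τ.2⟩)
          (fun τ => ⟨ins 1 (ins 0 τ.1), cond_ins_one (cond_ins_zero τ.2)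
            (ins_apply_self 0 τ.1)⟩) x
      left_inv := ?_
      right_inv := ?_ }
  · rintro ⟨π, hπ⟩
    by_cases h0 : π 0 = Fin.last (n + 1)
    · simp only [dif_pos h0]
      apply Subtype.ext
      have hinv : π⁻¹ (Fin.last (n + 1)) = 0 := by
        rw [← h0]
        exact π.symm_apply_apply 0
      show ins 0 (del π) = π
      rw [← hinv]
      exact ins_del π
    · obtain ⟨hp1, h00⟩ := top_pos hπ h0
      simp only [dif_neg h0]
      apply Subtype.ext
      have h2 : (del π)⁻¹ (Fin.last n) = 0 := by
        rw [← del_zero_eq_last hp1 h00]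
        exact (del π).symm_apply_apply 0
      show ins 1 (ins 0 (del (del π))) = π
      rw [show (0 : Fin (n + 1)) = (del π)⁻¹ (Fin.last n) from h2.symm, ins_del,
        show (1 : Fin (n + 2)) = π⁻¹ (Fin.last (n + 1)) from hp1.symm, ins_del]
  · rintro (⟨τ, hτ⟩ | ⟨τ, hτ⟩)
    · have h0 : ins 0 τ 0 = Fin.last (n + 1) := ins_apply_self 0 τ
      simp only [dif_pos h0]
      exact congrArg Sum.inl (Subtype.ext (del_ins 0 τ))
    · have h0 : ins 1 (ins 0 τ) 0 ≠ Fin.last (n + 1) := by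
        rw [← one_succAbove_zero, ins_apply_succAbove]
        intro he
        have := congrArg Fin.val he
        simp only [Fin.coe_castSucc, Fin.val_last] at this
        have := (ins 0 τ 0).isLt
        omega
      simp only [dif_neg h0]
      refine congrArg Sum.inr (Subtype.ext ?_)
      show del (del (ins 1 (ins 0 τ))) = τ
      rw [del_ins 1 (ins 0 τ), del_ins]

lemma card_cond : ∀ N : ℕ, Nat.card {π : Equiv.Perm (Fin N) // Cond π} = Nat.fib (N + 1)
  | 0 => by
    have hall : ∀ π : Equiv.Perm (Fin 0), Cond π := fun π i k _ => i.elim0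
    rw [Nat.card_congr (Equiv.subtypeUnivEquiv hall)]
    simp [Nat.card_eq_fintype_card]
  | 1 => by
    have hall : ∀ π : Equiv.Perm (Fin 1), Cond π := by
      intro π i k hik
      have h1 : (i : ℕ) < 1 := i.isLt
      have h2 : (k : ℕ) < 1 := k.isLt
      omega
    rw [Nat.card_congr (Equiv.subtypeUnivEquiv hall)]
    simp [Nat.card_eq_fintype_card]
  | (N + 2) => by
    rw [card_cond_rec, card_cond (N + 1), card_cond N]
    have h := Nat.fib_add_two (n := N + 1)
    have e1 : Nat.fib (N + 2 + 1) = Nat.fib (N + 1 + 2) := congrArg Nat.fib (by omega)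
    omega

lemma snCard_R3 (N : ℕ) :
    SnCard N ({⟨3, p123⟩, ⟨3, p132⟩, ⟨3, p213⟩} : Set ((n : ℕ) × Equiv.Perm (Fin n))) =
      Nat.fib (N + 1) := by
  rw [SnCard, Nat.card_congr (Equiv.subtypeEquivRight (fun π => cond_iff_avoid3 π)),
    card_cond]

end Pat

/-- For all `k ≥ 0` and `n ≥ k`,
`|S_n(E^k({123,132,213}))| = (n!/(n-k)!) ⬝ F_{n+1-k}`. -/
theorem statement15 (k n : ℕ) (hkn : k ≤ n) :
    SnCard n (PermExt^[k]
        ({⟨3, p123⟩, ⟨3, p132⟩, ⟨3, p213⟩} : Set ((n : ℕ) × Equiv.Perm (Fin n)))) =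
      Nat.descFactorial n k * Nat.fib (n + 1 - k) := by
  induction k generalizing n with
  | zero =>
    simp only [Function.iterate_zero, id_eq, Nat.descFactorial_zero, one_mul, Nat.sub_zero]
    exact Pat.snCard_R3 n
  | succ k ih =>
    obtain ⟨m, rfl⟩ : ∃ m, n = m + 1 := ⟨n - 1, by omega⟩
    rw [Function.iterate_succ_apply', Pat.snCard_permExt, ih m (by omega),
      Nat.succ_descFactorial_succ]
    have e1 : m + 1 + 1 - (k + 1) = m + 1 - k := by omega
    rw [e1, mul_assoc]
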